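/- arXiv:2103.12580 — 2 statements merged into one kernel-verified Lean document; each statement's English description precedes it below -/
import Mathlib

section
/- If J : [0,∞) → ℝ is differentiable, nonnegative, and satisfies J'(t) ≤ -γ √(J(t)) for all t ≥ 0 with a constant γ > 0, then J(t) = 0 for all t ≥ t_F where t_F = 2√(J(0))/γ. -/
theorem stmt_5 (J : ℝ → ℝ) (γ : ℝ) (hγ : 0 < γ)
    (hdiff : Differentiable ℝ J)
    (hnonneg : ∀ t, 0 ≤ t → 0 ≤ J t)
    (hineq : ∀ t, 0 ≤ t → deriv J t ≤ -γ * Real.sqrt (J t)) :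
    ∀ t, 2 * Real.sqrt (J 0) / γ ≤ t → J t = 0 := by
  set tF := 2 * Real.sqrt (J 0) / γ with htFdef
  have htF0 : 0 ≤ tF := by positivity
  have hanti : AntitoneOn J (Set.Ici 0) := by
    apply antitoneOn_of_deriv_nonpos (convex_Ici 0) hdiff.continuous.continuousOn
      (fun t _ => (hdiff t).differentiableWithinAt)
    intro t ht
    rw [interior_Ici] at ht
    have h1 := hineq t ht.le
    have h2 : 0 ≤ Real.sqrt (J t) := Real.sqrt_nonneg _
    nlinarith
  have hkey : J tF = 0 := by
    by_contra hne
    have hpos : 0 < J tF := lt_of_le_of_ne (hnonneg tF htF0) (Ne.symm hne)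
    have hposOn : ∀ t ∈ Set.Icc 0 tF, 0 < J t := fun t ht =>
      lt_of_lt_of_le hpos (hanti (Set.mem_Ici.2 ht.1) (Set.mem_Ici.2 htF0) ht.2)
    have hg : AntitoneOn (fun t => Real.sqrt (J t) + γ / 2 * t) (Set.Icc 0 tF) := by
      apply antitoneOn_of_deriv_nonpos (convex_Icc 0 tF)
      · exact (hdiff.continuous.sqrt.continuousOn).add
          (continuousOn_const.mul continuousOn_id)
      · intro t ht
        rw [interior_Icc] at ht
        have hJt := hposOn t ⟨ht.1.le, ht.2.le⟩
        exact (((hdiff t).hasDerivAt.sqrt (ne_of_gt hJt)).add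
          ((hasDerivAt_id t).const_mul (γ / 2))).differentiableAt.differentiableWithinAt
      · intro t ht
        rw [interior_Icc] at ht
        have hJt := hposOn t ⟨ht.1.le, ht.2.le⟩
        have hs : HasDerivAt (fun t => Real.sqrt (J t) + γ / 2 * t)
            (deriv J t / (2 * Real.sqrt (J t)) + γ / 2 * 1) t :=
          ((hdiff t).hasDerivAt.sqrt (ne_of_gt hJt)).add ((hasDerivAt_id t).const_mul (γ / 2))
        rw [hs.deriv]
        have hsq : 0 < Real.sqrt (J t) := Real.sqrt_pos.2 hJt
        have h1 := hineq t ht.1.le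
        have h2 : deriv J t / (2 * Real.sqrt (J t)) ≤
            -γ * Real.sqrt (J t) / (2 * Real.sqrt (J t)) := by gcongr
        have h3 : -γ * Real.sqrt (J t) / (2 * Real.sqrt (J t)) = -(γ / 2) := by
          field_simp
        rw [h3] at h2
        linarith
    have := hg (Set.left_mem_Icc.2 htF0) (Set.right_mem_Icc.2 htF0) htF0
    have htFval : γ / 2 * tF = Real.sqrt (J 0) := by
      rw [htFdef]; field_simp
    have hsqpos : 0 < Real.sqrt (J tF) := Real.sqrt_pos.2 hpos
    simp only [mul_zero, add_zero] at this
    linarith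
  intro t ht
  have h1 := hanti (Set.mem_Ici.2 htF0) (Set.mem_Ici.2 (htF0.trans ht)) ht
  have h2 := hnonneg t (htF0.trans ht)
  rw [hkey] at h1
  linarith
end

section
/- If J : [0,∞) → ℝ is differentiable, nonnegative, and satisfies J'(t) ≤ -γ √(J(t)) with γ > 0, then for all t in [0, 2√(J(0))/γ] one has √(J(t)) ≤ √(J(0)) - (γ/2) t. -/
theorem stmt_6 (J : ℝ → ℝ) (γ : ℝ) (hγ : 0 < γ)
    (hdiff : Differentiable ℝ J)
    (hnonneg : ∀ t, 0 ≤ t → 0 ≤ J t)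
    (hineq : ∀ t, 0 ≤ t → deriv J t ≤ -γ * Real.sqrt (J t)) :
    ∀ t ∈ Set.Icc (0 : ℝ) (2 * Real.sqrt (J 0) / γ),
      Real.sqrt (J t) ≤ Real.sqrt (J 0) - γ / 2 * t := by
  set c := Real.sqrt (J 0) with hc
  have hc0 : 0 ≤ c := Real.sqrt_nonneg _
  intro t ht
  obtain ⟨ht0, htT⟩ := ht
  have hlin : 0 ≤ c - γ / 2 * t := by
    have h1 : t * γ ≤ 2 * c := (le_div_iff₀ hγ).mp htT
    linarith
  have key : J t ≤ (c - γ / 2 * t) ^ 2 := by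
    apply le_of_forall_pos_le_add
    intro ε' hε'
    have h1t : (0:ℝ) < 1 + t := by linarith
    set ε := ε' / (1 + t) with hε
    have hεpos : 0 < ε := div_pos hε' h1t
    have hB' : ∀ x : ℝ,
        HasDerivAt (fun x => (c - γ/2*x)^2 + ε*(1+x))
          (-γ*(c - γ/2*x) + ε) x := by
      intro x
      have h1 : HasDerivAt (fun x : ℝ => c - γ/2*x) (-(γ/2)) x := by
        simpa using (((hasDerivAt_id x).const_mul (γ/2)).const_sub c)
      have h2 : HasDerivAt (fun x : ℝ => (c - γ/2*x)^2)
          (2 * (c - γ/2*x) ^ 1 * -(γ/2)) x := h1.pow 2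
      have h3 : HasDerivAt (fun x : ℝ => ε*(1+x)) (ε * 1) x := by
        simpa using ((hasDerivAt_id x).const_add 1).const_mul ε
      have h4 := h2.add h3
      have : (2 * (c - γ/2*x) ^ 1 * -(γ/2) + ε * 1) = -γ*(c - γ/2*x) + ε := by ring
      rw [this] at h4
      exact h4
    have bound : ∀ x ∈ Set.Ico (0:ℝ) (2 * c / γ),
        J x = (c - γ/2*x)^2 + ε*(1+x) → deriv J x < -γ*(c - γ/2*x) + ε := by
      intro x hx hJx
      have hx0 : 0 ≤ x := hx.1
      have hxlin : 0 ≤ c - γ/2*x := by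
        have : γ * x < 2 * c := by
          have := hx.2; rw [lt_div_iff₀ hγ] at this; linarith
        linarith
      have hsq : c - γ/2*x ≤ Real.sqrt (J x) := by
        rw [Real.le_sqrt hxlin]
        · nlinarith [mul_pos hεpos (by linarith : (0:ℝ) < 1 + x)]
        · exact hnonneg x hx0
      have := hineq x hx0
      have h5 : -γ * Real.sqrt (J x) ≤ -γ * (c - γ/2*x) := by
        nlinarith
      linarith
    have main := image_le_of_deriv_right_lt_deriv_boundary
      (f := J) (f' := deriv J)
      (B := fun x => (c - γ/2*x)^2 + ε*(1+x))
      (B' := fun x => -γ*(c - γ/2*x) + ε)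
      (hdiff.continuous.continuousOn)
      (fun x _ => (hdiff x).hasDerivAt.hasDerivWithinAt)
      (by
        have h0 : c ^ 2 = J 0 := Real.sq_sqrt (hnonneg 0 le_rfl)
        show J 0 ≤ (c - γ/2*0)^2 + ε*(1+0)
        nlinarith)
      hB' bound
    have := main ⟨ht0, htT⟩
    have hεt : ε * (1 + t) = ε' := div_mul_cancel₀ _ (ne_of_gt h1t)
    calc J t ≤ (c - γ/2*t)^2 + ε*(1+t) := this
      _ = (c - γ/2*t)^2 + ε' := by rw [hεt]
  calc Real.sqrt (J t) ≤ Real.sqrt ((c - γ / 2 * t) ^ 2) := Real.sqrt_le_sqrt key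
    _ = c - γ / 2 * t := by rw [Real.sqrt_sq hlin]
end
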